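/- arXiv:1909.12658 — 4 statements merged into one kernel-verified Lean document; each statement's English description precedes it below -/
import Mathlib

section
/- Let n ∈ ℕ, let f : (Fin n → Bool) → Bool, and let I ⊆ Fin n be a nonempty finite set. Then MC(I) = min_{k ∈ I} ( MC(I∖{k}) + w(I,k) ). -/
open Finset

def restrict (n : ℕ) (f : (Fin n → Bool) → Bool) (S : Finset (Fin n)) (b : Fin n → Bool) :
    (Fin n → Bool) → Bool :=
  fun x => f fun i => if i ∈ S then b i else x i

def BoolDependsOn (n : ℕ) (g : (Fin n → Bool) → Bool) (i : Fin n) : Prop :=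
  ∃ x : Fin n → Bool, g x ≠ g (Function.update x i (!x i))

noncomputable def width (n : ℕ) (f : (Fin n → Bool) → Bool) (I : Finset (Fin n)) (i : Fin n) : ℕ :=
  Set.ncard {g : (Fin n → Bool) → Bool | BoolDependsOn n g i ∧ ∃ b, g = restrict n f Iᶜ b}

noncomputable def RC (n : ℕ) (f : (Fin n → Bool) → Bool) (B J : Finset (Fin n)) : ℕ :=
  sInf { c | ∃ σ : Fin J.card ≃ {j // j ∈ J},
    c = ∑ j : Fin J.card,
          width n f (B ∪ (Finset.Iic j).image (fun t => ((σ t : {j // j ∈ J}) : Fin n))) (σ j) }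

noncomputable def MC (n : ℕ) (f : (Fin n → Bool) → Bool) (I : Finset (Fin n)) : ℕ :=
  RC n f ∅ I

/-- The cost of a particular ordering. -/
noncomputable def cost (n : ℕ) (f : (Fin n → Bool) → Bool) (J : Finset (Fin n))
    (σ : Fin J.card ≃ {j // j ∈ J}) : ℕ :=
  ∑ j : Fin J.card,
    width n f (∅ ∪ (Finset.Iic j).image (fun t => ((σ t : {j // j ∈ J}) : Fin n))) (σ j)

lemma MC_eq (n : ℕ) (f : (Fin n → Bool) → Bool) (J : Finset (Fin n)) :
    MC n f J = sInf { c | ∃ σ : Fin J.card ≃ {j // j ∈ J}, c = cost n f J σ } := rfl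

lemma MC_set_nonempty (n : ℕ) (f : (Fin n → Bool) → Bool) (J : Finset (Fin n)) :
    { c | ∃ σ : Fin J.card ≃ {j // j ∈ J}, c = cost n f J σ }.Nonempty :=
  ⟨cost n f J J.equivFin.symm, J.equivFin.symm, rfl⟩

/-- key splitting computation -/
lemma cost_split (n : ℕ) (f : (Fin n → Bool) → Bool) {I : Finset (Fin n)} {k : Fin n}
    (hk : k ∈ I) (hc : (I.erase k).card + 1 = I.card)
    (σ : Fin I.card ≃ {j // j ∈ I})
    (σ' : Fin (I.erase k).card ≃ {j // j ∈ I.erase k})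
    (hlast : ((σ (Fin.cast hc (Fin.last _)) : {j // j ∈ I}) : Fin n) = k)
    (hcs : ∀ j : Fin (I.erase k).card,
      ((σ (Fin.cast hc j.castSucc) : {j // j ∈ I}) : Fin n)
        = ((σ' j : {j // j ∈ I.erase k}) : Fin n)) :
    cost n f I σ = cost n f (I.erase k) σ' + width n f I k := by
  classical
  have hre : cost n f I σ = ∑ j : Fin ((I.erase k).card + 1),
      width n f (∅ ∪ (Finset.Iic (Fin.cast hc j)).image
        (fun t => ((σ t : {j // j ∈ I}) : Fin n))) (σ (Fin.cast hc j)) := by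
    rw [cost]
    rw [← Equiv.sum_comp (finCongr hc)
      (fun j => width n f (∅ ∪ (Finset.Iic j).image
        (fun t => ((σ t : {j // j ∈ I}) : Fin n))) (σ j))]
    rfl
  rw [hre, Fin.sum_univ_castSucc]
  congr 1
  · -- middle terms
    rw [cost]
    apply Finset.sum_congr rfl
    intro j _
    have himg : (Finset.Iic (Fin.cast hc j.castSucc)).image
        (fun t => ((σ t : {j // j ∈ I}) : Fin n))
        = (Finset.Iic j).image (fun t => ((σ' t : {j // j ∈ I.erase k}) : Fin n)) := by
      ext a
      simp only [mem_image, mem_Iic]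
      constructor
      · rintro ⟨t, ht, rfl⟩
        have htv : (t : ℕ) ≤ (j : ℕ) := ht
        refine ⟨⟨t, lt_of_le_of_lt htv j.isLt⟩, htv, ?_⟩
        have hmk : Fin.cast hc (Fin.castSucc ⟨(t : ℕ), lt_of_le_of_lt htv j.isLt⟩) = t := by
          apply Fin.ext
          simp only [Fin.coe_cast, Fin.coe_castSucc]
        rw [← hcs ⟨(t : ℕ), lt_of_le_of_lt htv j.isLt⟩, hmk]
      · rintro ⟨t, ht, rfl⟩
        refine ⟨Fin.cast hc t.castSucc, ?_, hcs t⟩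
        rw [Fin.le_def]
        exact ht
    rw [himg, hcs j]
  · -- last term
    have huniv : (Finset.Iic (Fin.cast hc (Fin.last (I.erase k).card))).image
        (fun t => ((σ t : {j // j ∈ I}) : Fin n)) = I := by
      ext a
      simp only [mem_image, mem_Iic]
      constructor
      · rintro ⟨t, _, rfl⟩
        exact (σ t).2
      · intro ha
        refine ⟨σ.symm ⟨a, ha⟩, ?_, by simp⟩
        have : ((σ.symm ⟨a, ha⟩ : Fin I.card) : ℕ) < (I.erase k).card + 1 := by
          rw [hc]; exact (σ.symm ⟨a, ha⟩).isLt
        simpa [Fin.le_def, Nat.lt_succ_iff] using this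
    rw [huniv, hlast, Finset.empty_union]

/-- Extend an ordering of `I.erase k` by putting `k` last. -/
lemma exists_ext (n : ℕ) (f : (Fin n → Bool) → Bool) {I : Finset (Fin n)} {k : Fin n}
    (hk : k ∈ I) (hc : (I.erase k).card + 1 = I.card)
    (σ' : Fin (I.erase k).card ≃ {j // j ∈ I.erase k}) :
    ∃ σ : Fin I.card ≃ {j // j ∈ I},
      cost n f I σ = cost n f (I.erase k) σ' + width n f I k := by
  classical
  have hins : ∀ x : Fin n, x ∈ insert k (I.erase k) ↔ x ∈ I := by
    intro x; rw [Finset.insert_erase hk]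
  set σ : Fin I.card ≃ {j // j ∈ I} :=
    (finCongr hc.symm).trans <| finSuccEquivLast.trans <| (Equiv.optionCongr σ').trans <|
      (Finset.subtypeInsertEquivOption (Finset.notMem_erase k I)).symm.trans
        (Equiv.subtypeEquivRight hins) with hσdef
  have hstep : ∀ j : Fin I.card, σ j = (Equiv.subtypeEquivRight hins)
      ((Finset.subtypeInsertEquivOption (Finset.notMem_erase k I)).symm
        ((Equiv.optionCongr σ') (finSuccEquivLast (finCongr hc.symm j)))) := by
    intro j; rfl
  have hlast : ((σ (Fin.cast hc (Fin.last _)) : {j // j ∈ I}) : Fin n) = k := by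
    rw [hstep]
    have h1 : finCongr hc.symm (Fin.cast hc (Fin.last (I.erase k).card))
        = Fin.last (I.erase k).card := by
      apply Fin.ext; simp
    rw [h1, finSuccEquivLast_last]
    simp [Finset.subtypeInsertEquivOption]
  have hcs : ∀ j : Fin (I.erase k).card,
      ((σ (Fin.cast hc j.castSucc) : {j // j ∈ I}) : Fin n)
        = ((σ' j : {j // j ∈ I.erase k}) : Fin n) := by
    intro j
    rw [hstep]
    have h1 : finCongr hc.symm (Fin.cast hc j.castSucc) = j.castSucc := by
      apply Fin.ext; simp
    rw [h1, finSuccEquivLast_castSucc]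
    simp [Finset.subtypeInsertEquivOption]
  exact ⟨σ, cost_split n f hk hc σ σ' hlast hcs⟩

/-- Split an arbitrary ordering of `I` at its last element. -/
lemma exists_split (n : ℕ) (f : (Fin n → Bool) → Bool) {I : Finset (Fin n)}
    (hI : I.Nonempty) (σ : Fin I.card ≃ {j // j ∈ I}) :
    ∃ k ∈ I, ∃ σ' : Fin (I.erase k).card ≃ {j // j ∈ I.erase k},
      cost n f I σ = cost n f (I.erase k) σ' + width n f I k := by
  classical
  have hm : 0 < I.card := Finset.card_pos.mpr hI
  set L : Fin I.card := ⟨I.card - 1, by omega⟩ with hL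
  have hLval : (L : ℕ) = I.card - 1 := rfl
  set k : Fin n := (σ L : Fin n) with hkdef
  have hk : k ∈ I := (σ L).2
  have hc : (I.erase k).card + 1 = I.card := Finset.card_erase_add_one hk
  have hcL : Fin.cast hc (Fin.last (I.erase k).card) = L := by
    apply Fin.ext
    rw [hLval]
    simp
    omega
  have hne : ∀ j : Fin (I.erase k).card,
      ((σ (Fin.cast hc j.castSucc) : {j // j ∈ I}) : Fin n) ≠ k := by
    intro j h
    have h1 : σ (Fin.cast hc j.castSucc) = σ L := Subtype.ext h
    have h2 : Fin.cast hc j.castSucc = L := σ.injective h1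
    have h3 : (j : ℕ) = I.card - 1 := by
      have := congrArg (fun t : Fin I.card => (t : ℕ)) h2
      simpa [hLval] using this
    omega
  let g : Fin (I.erase k).card → {j // j ∈ I.erase k} := fun j =>
    ⟨((σ (Fin.cast hc j.castSucc) : {j // j ∈ I}) : Fin n),
      Finset.mem_erase.mpr ⟨hne j, (σ (Fin.cast hc j.castSucc)).2⟩⟩
  have hginj : Function.Injective g := by
    intro a b h
    have h1 := congrArg Subtype.val h
    have h2 : Fin.cast hc a.castSucc = Fin.cast hc b.castSucc :=
      σ.injective (Subtype.ext h1)
    have h3 : (a : ℕ) = (b : ℕ) := by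
      have := congrArg (fun t : Fin I.card => (t : ℕ)) h2
      simpa using this
    exact Fin.ext h3
  have hgbij : Function.Bijective g :=
    (Fintype.bijective_iff_injective_and_card g).mpr ⟨hginj, by
      simp only [Fintype.card_fin, Fintype.card_coe]⟩
  let σ' : Fin (I.erase k).card ≃ {j // j ∈ I.erase k} := Equiv.ofBijective g hgbij
  have hlast : ((σ (Fin.cast hc (Fin.last _)) : {j // j ∈ I}) : Fin n) = k := by
    rw [hcL]
  have hcs : ∀ j : Fin (I.erase k).card,
      ((σ (Fin.cast hc j.castSucc) : {j // j ∈ I}) : Fin n)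
        = ((σ' j : {j // j ∈ I.erase k}) : Fin n) := fun j => rfl
  exact ⟨k, hk, σ', cost_split n f hk hc σ σ' hlast hcs⟩

/-- Lemma 2 (key DP lemma, Friedman–Supowit): for nonempty `I`,
`MC(I) = min_{k ∈ I} (MC(I \ {k}) + w(I, k))`. -/
theorem stmt_0 (n : ℕ) (f : (Fin n → Bool) → Bool) (I : Finset (Fin n)) (hI : I.Nonempty) :
    MC n f I = I.inf' hI (fun k => MC n f (I.erase k) + width n f I k) := by
  classical
  apply le_antisymm
  · rw [Finset.le_inf'_iff]
    intro k hk
    have hc : (I.erase k).card + 1 = I.card := Finset.card_erase_add_one hk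
    obtain ⟨σ', hσ'⟩ := Nat.sInf_mem (MC_set_nonempty n f (I.erase k))
    obtain ⟨σ, hσ⟩ := exists_ext n f hk hc σ'
    rw [MC_eq n f I]
    calc sInf { c | ∃ τ : Fin I.card ≃ {j // j ∈ I}, c = cost n f I τ }
        ≤ cost n f I σ := Nat.sInf_le ⟨σ, rfl⟩
      _ = cost n f (I.erase k) σ' + width n f I k := hσ
      _ = MC n f (I.erase k) + width n f I k := by
          rw [MC_eq n f (I.erase k), ← hσ']
  · obtain ⟨σ, hσ⟩ := Nat.sInf_mem (MC_set_nonempty n f I)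
    obtain ⟨k, hk, σ', hsplit⟩ := exists_split n f hI σ
    calc I.inf' hI (fun k => MC n f (I.erase k) + width n f I k)
        ≤ MC n f (I.erase k) + width n f I k := Finset.inf'_le _ hk
      _ ≤ cost n f (I.erase k) σ' + width n f I k := by
          gcongr
          exact Nat.sInf_le ⟨σ', rfl⟩
      _ = cost n f I σ := hsplit.symm
      _ = MC n f I := by rw [MC_eq n f I, ← hσ]
end

section
/- For all n, k ∈ ℕ with n ≥ 1 and k ≤ n, the binomial coefficient satisfies C(n,k) ≤ 2^{n·H(k/n)}, where the right-hand side is a real number and C(n,k) is cast to ℝ. -/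
/-- The binary entropy function `H(x) = -x·log₂ x - (1-x)·log₂(1-x)`
(with the convention `log₂ 0 = 0`, so `H(0) = H(1) = 0`). -/
noncomputable def binEntropy (x : ℝ) : ℝ :=
  -x * Real.logb 2 x - (1 - x) * Real.logb 2 (1 - x)

lemma term_le_one (n k : ℕ) (hk : k ≤ n) (p : ℝ) (hp0 : 0 ≤ p) (hp1 : p ≤ 1) :
    (n.choose k : ℝ) * p ^ k * (1 - p) ^ (n - k) ≤ 1 := by
  have h := add_pow p (1 - p) n
  have hsum : (1 : ℝ) = ∑ m ∈ Finset.range (n + 1), p ^ m * (1 - p) ^ (n - m) * n.choose m := by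
    simpa using h
  nth_rewrite 2 [hsum]
  have hmem : k ∈ Finset.range (n + 1) := Finset.mem_range.mpr (Nat.lt_succ_of_le hk)
  calc (n.choose k : ℝ) * p ^ k * (1 - p) ^ (n - k)
      = p ^ k * (1 - p) ^ (n - k) * n.choose k := by ring
    _ ≤ ∑ m ∈ Finset.range (n + 1), p ^ m * (1 - p) ^ (n - m) * n.choose m := by
        apply Finset.single_le_sum (fun m _ => ?_) hmem
        have : (0:ℝ) ≤ 1 - p := by linarith
        positivity

/-- `C(n,k) ≤ 2^{n·H(k/n)}` for `k ≤ n`, `n ≥ 1`. -/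
theorem stmt_5 (n k : ℕ) (hn : 1 ≤ n) (hk : k ≤ n) :
    (n.choose k : ℝ) ≤ (2 : ℝ) ^ ((n : ℝ) * binEntropy ((k : ℝ) / (n : ℝ))) := by
  have hn0 : (0:ℝ) < n := by exact_mod_cast hn
  rcases Nat.eq_zero_or_pos k with rfl | hk0
  · simp [binEntropy, Real.logb]
  rcases eq_or_lt_of_le hk with rfl | hkn
  · simp [binEntropy, div_self hn0.ne', Real.logb]
  set p : ℝ := (k : ℝ) / n with hp
  have hp0 : 0 < p := by positivity
  have hp1 : p < 1 := by
    rw [hp, div_lt_one hn0]; exact_mod_cast hkn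
  have h1p : 0 < 1 - p := by linarith
  have hnp : (n : ℝ) * p = k := by
    rw [hp]; field_simp
  have hn1p : (n : ℝ) * (1 - p) = (n - k : ℕ) := by
    push_cast [Nat.cast_sub hk]
    rw [hp]; field_simp
  have hH : (n : ℝ) * binEntropy p =
      (-(k:ℝ)) * Real.logb 2 p + (-((n - k : ℕ):ℝ)) * Real.logb 2 (1 - p) := by
    rw [binEntropy]
    rw [← hnp, ← hn1p]; ring
  rw [hH, Real.rpow_add (by norm_num)]
  have hpow : ∀ (m : ℕ) (x : ℝ), 0 < x →
      (2 : ℝ) ^ ((-(m:ℝ)) * Real.logb 2 x) = (x ^ m)⁻¹ := by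
    intro m x hx
    rw [neg_mul, Real.rpow_neg (by norm_num), mul_comm,
      Real.rpow_mul (by norm_num), Real.rpow_logb (by norm_num) (by norm_num) hx,
      ← Real.rpow_natCast]
  rw [hpow k p hp0, hpow (n - k) (1 - p) h1p]
  have hpos : (0:ℝ) < p ^ k * (1 - p) ^ (n - k) := by positivity
  have key := term_le_one n k hk p hp0.le hp1.le
  calc (n.choose k : ℝ) ≤ 1 / (p ^ k * (1 - p) ^ (n - k)) := by
        rw [le_div_iff₀ hpos]
        calc (n.choose k : ℝ) * (p ^ k * (1 - p) ^ (n - k))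
            = (n.choose k : ℝ) * p ^ k * (1 - p) ^ (n - k) := by ring
          _ ≤ 1 := key
    _ = (p ^ k)⁻¹ * ((1 - p) ^ (n - k))⁻¹ := by rw [one_div, mul_inv]
end

section
/- Let L = log₂3 and let α* = (L−1)/(2L−1). Then (1/2)·H(α*) + (1−α*) + α*·L ≤ log₂(2.98582). (This shows that the simple quantum divide-and-conquer algorithm without classical preprocessing runs in time O*(γ₀ⁿ) with γ₀ ≤ 2.98582, improving on the classical O*(3ⁿ) bound.) -/
lemma aux_l3_lo : (1.0986122865 : ℝ) < Real.log 3 := by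
  have key : (306 : ℝ) * Real.log 3 = 485 * Real.log 2 + Real.log ((3 : ℝ)^306 / 2^485) := by
    rw [Real.log_div (by positivity) (by positivity), Real.log_pow, Real.log_pow]
    push_cast; ring
  have h1 : (1 : ℝ) - ((3 : ℝ)^306 / 2^485)⁻¹ ≤ Real.log ((3 : ℝ)^306 / 2^485) :=
    Real.one_sub_inv_le_log_of_pos (by positivity)
  have hnum : (306 : ℝ) * 1.0986122865 < 485 * 0.6931471803 + (1 - ((3 : ℝ)^306 / 2^485)⁻¹) := by
    rw [show (485:ℕ) = 242 + 243 from rfl, show (306:ℕ) = 153 + 153 from rfl, pow_add, pow_add]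
    norm_num
  nlinarith [Real.log_two_gt_d9]

lemma aux_l3_hi : Real.log 3 < (1.0986122908 : ℝ) := by
  have key : (306 : ℝ) * Real.log 3 = 485 * Real.log 2 + Real.log ((3 : ℝ)^306 / 2^485) := by
    rw [Real.log_div (by positivity) (by positivity), Real.log_pow, Real.log_pow]
    push_cast; ring
  have h1 : Real.log ((3 : ℝ)^306 / 2^485) ≤ (3 : ℝ)^306 / 2^485 - 1 :=
    Real.log_le_sub_one_of_pos (by positivity)
  have hnum : 485 * (0.6931471808 : ℝ) + ((3 : ℝ)^306 / 2^485 - 1) < 306 * 1.0986122908 := by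
    rw [show (485:ℕ) = 242 + 243 from rfl, show (306:ℕ) = 153 + 153 from rfl, pow_add, pow_add]
    norm_num
  nlinarith [Real.log_two_lt_d9]

lemma aux_la : (-1.31090050 : ℝ) ≤ Real.log (26957727 / 10^8 : ℝ) := by
  have heq : (26957727 / 10^8 : ℝ) = (26957727 * 3^87 / (10^8 * 2^136)) * 2^136 / 3^87 := by
    norm_num
  have key : Real.log (26957727 / 10^8 : ℝ)
      = Real.log ((26957727 * 3^87 / (10^8 * 2^136)) : ℝ) + 136 * Real.log 2 - 87 * Real.log 3 := by
    rw [heq, Real.log_div (by positivity) (by positivity),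
      Real.log_mul (by positivity) (by positivity), Real.log_pow, Real.log_pow]
    push_cast; ring
  have h1 : (1 : ℝ) - (((26957727 : ℝ) * 3^87 / (10^8 * 2^136)))⁻¹
      ≤ Real.log ((26957727 * 3^87 / (10^8 * 2^136)) : ℝ) :=
    Real.one_sub_inv_le_log_of_pos (by positivity)
  have hnum : (-1.31090050 : ℝ) ≤ (1 - (((26957727 : ℝ) * 3^87 / (10^8 * 2^136)))⁻¹)
      + 136 * 0.6931471803 - 87 * 1.0986122908 := by
    norm_num
  nlinarith [Real.log_two_gt_d9, aux_l3_hi]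

lemma aux_lb : (-0.31413215 : ℝ) ≤ Real.log (73042270 / 10^8 : ℝ) := by
  have heq : (73042270 / 10^8 : ℝ) = (73042270 * 3^23 / (10^8 * 2^36)) * 2^36 / 3^23 := by
    norm_num
  have key : Real.log (73042270 / 10^8 : ℝ)
      = Real.log ((73042270 * 3^23 / (10^8 * 2^36)) : ℝ) + 36 * Real.log 2 - 23 * Real.log 3 := by
    rw [heq, Real.log_div (by positivity) (by positivity),
      Real.log_mul (by positivity) (by positivity), Real.log_pow, Real.log_pow]
    push_cast; ring
  have h1 : (1 : ℝ) - (((73042270 : ℝ) * 3^23 / (10^8 * 2^36)))⁻¹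
      ≤ Real.log ((73042270 * 3^23 / (10^8 * 2^36)) : ℝ) :=
    Real.one_sub_inv_le_log_of_pos (by positivity)
  have hnum : (-0.31413215 : ℝ) ≤ (1 - (((73042270 : ℝ) * 3^23 / (10^8 * 2^36)))⁻¹)
      + 36 * 0.6931471803 - 23 * 1.0986122908 := by
    norm_num
  nlinarith [Real.log_two_gt_d9, aux_l3_hi]

lemma aux_lc : (1.09387379 : ℝ) ≤ Real.log (2.98582 : ℝ) := by
  have heq : (2.98582 : ℝ) = ((149291 : ℝ) * 2^317 / (50000 * 3^201)) * 3^201 / 2^317 := by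
    rw [show (317:ℕ) = 158 + 159 from rfl, pow_add]
    norm_num
  have key : Real.log (2.98582 : ℝ)
      = Real.log (((149291 : ℝ) * 2^317 / (50000 * 3^201))) + 201 * Real.log 3
        - 317 * Real.log 2 := by
    rw [heq, Real.log_div (by positivity) (by positivity),
      Real.log_mul (by positivity) (by positivity), Real.log_pow, Real.log_pow]
    push_cast; ring
  have h1 : (1 : ℝ) - (((149291 : ℝ) * 2^317 / (50000 * 3^201)))⁻¹
      ≤ Real.log (((149291 : ℝ) * 2^317 / (50000 * 3^201))) :=
    Real.one_sub_inv_le_log_of_pos (by positivity)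
  have hnum : (1.09387379 : ℝ) ≤ (1 - (((149291 : ℝ) * 2^317 / (50000 * 3^201)))⁻¹)
      + 201 * 1.0986122865 - 317 * 0.6931471808 := by
    rw [show (317:ℕ) = 158 + 159 from rfl, pow_add]
    norm_num
  nlinarith [Real.log_two_lt_d9, aux_l3_lo]

/-- For `α* = (log₂3 − 1)/(2·log₂3 − 1)`, the exponent of the simple quantum algorithm
satisfies `H(α*)/2 + (1−α*) + α*·log₂3 ≤ log₂ 2.98582`. -/
theorem stmt_12 :
    (1 / 2) * binEntropy ((Real.logb 2 3 - 1) / (2 * Real.logb 2 3 - 1))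
        + (1 - (Real.logb 2 3 - 1) / (2 * Real.logb 2 3 - 1))
        + ((Real.logb 2 3 - 1) / (2 * Real.logb 2 3 - 1)) * Real.logb 2 3
      ≤ Real.logb 2 2.98582 := by
  have l2lo : (0.6931471803 : ℝ) < Real.log 2 := Real.log_two_gt_d9
  have l2hi : Real.log 2 < (0.6931471808 : ℝ) := Real.log_two_lt_d9
  have l3lo := aux_l3_lo
  have l3hi := aux_l3_hi
  have hl2pos : (0 : ℝ) < Real.log 2 := by linarith
  have hl2ne : Real.log 2 ≠ 0 := ne_of_gt hl2pos
  set l2 := Real.log 2 with hl2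
  set l3 := Real.log 3 with hl3
  have hden : (0 : ℝ) < 2 * l3 - l2 := by linarith
  set A := (Real.logb 2 3 - 1) / (2 * Real.logb 2 3 - 1) with hAdef
  have hA : A = (l3 - l2) / (2 * l3 - l2) := by
    rw [hAdef, Real.logb]
    field_simp
    rw [← hl3, ← hl2, mul_comm l3 2, mul_div_cancel_right₀ _ hden.ne']
  have hA1 : (26957727 / 10^8 : ℝ) ≤ A := by
    rw [hA, le_div_iff₀ hden]
    nlinarith
  have hA2 : A ≤ (26957730 / 10^8 : ℝ) := by
    rw [hA, div_le_iff₀ hden]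
    nlinarith
  have hApos : (0 : ℝ) < A := lt_of_lt_of_le (by norm_num) hA1
  have hAlt1 : A < 1 := lt_of_le_of_lt hA2 (by norm_num)
  have hB1 : (73042270 / 10^8 : ℝ) ≤ 1 - A := by linarith
  have hB2 : 1 - A ≤ (73042273 / 10^8 : ℝ) := by linarith
  have hBpos : (0 : ℝ) < 1 - A := by linarith
  have hla : (-1.31090050 : ℝ) ≤ Real.log A :=
    le_trans aux_la (Real.log_le_log (by norm_num) hA1)
  have hlb : (-0.31413215 : ℝ) ≤ Real.log (1 - A) :=
    le_trans aux_lb (Real.log_le_log (by norm_num) hB1)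
  have hlaneg : Real.log A < 0 := Real.log_neg hApos hAlt1
  have hlbneg : Real.log (1 - A) < 0 := Real.log_neg hBpos (by linarith)
  have hlc := aux_lc
  -- reduce goal to an inequality about natural logs
  rw [binEntropy, Real.logb, Real.logb, Real.logb, Real.logb, le_div_iff₀ hl2pos]
  have key : ((1 / 2) * (-A * (Real.log A / l2) - (1 - A) * (Real.log (1 - A) / l2))
      + (1 - A) + A * (l3 / l2)) * l2
      = (1 / 2) * (A * (-Real.log A) + (1 - A) * (-Real.log (1 - A)))
        + (1 - A) * l2 + A * l3 := by
    field_simp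
    ring
  rw [key]
  have t1 : A * (-Real.log A) ≤ (26957730 / 10^8 : ℝ) * 1.31090050 :=
    mul_le_mul hA2 (by linarith) (by linarith) (by norm_num)
  have t2 : (1 - A) * (-Real.log (1 - A)) ≤ (73042273 / 10^8 : ℝ) * 0.31413215 :=
    mul_le_mul hB2 (by linarith) (by linarith) (by norm_num)
  have t3 : (1 - A) * l2 ≤ (73042273 / 10^8 : ℝ) * 0.6931471808 :=
    mul_le_mul hB2 (le_of_lt l2hi) (le_of_lt hl2pos) (by norm_num)
  have t4 : A * l3 ≤ (26957730 / 10^8 : ℝ) * 1.0986122908 :=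
    mul_le_mul hA2 (le_of_lt l3hi) (by linarith) (by norm_num)
  linarith
end

section
/- Let L = log₂3. There exists a real number α with 0 < α < 1/3 such that (1−α) + H(α) = (1/2)·H(α) + (1−α)·L and (1−α) + H(α) ≤ log₂(2.97625). (This shows that the one-parameter quantum algorithm with classical preprocessing runs in time O*(γ₁ⁿ) with γ₁ ≤ 2.97625.) -/
lemma binEntropy_eq (x : ℝ) : binEntropy x = Real.binEntropy x / Real.log 2 := by
  unfold binEntropy Real.binEntropy Real.logb
  rw [Real.log_inv, Real.log_inv]
  ring

@[fun_prop] lemma binEntropy_cont : Continuous binEntropy := by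
  have : binEntropy = fun x => Real.binEntropy x / Real.log 2 := funext binEntropy_eq
  rw [this]
  exact Real.binEntropy_continuous.div_const _

lemma logb_div_lt (m n p q : ℕ) (hm : 0 < m) (hn : 0 < n) (hq : 0 < q)
    (h : m ^ q < 2 ^ p * n ^ q) : Real.logb 2 ((m : ℝ) / n) < p / q := by
  have hn' : (0:ℝ) < n := by exact_mod_cast hn
  have hm' : (0:ℝ) < m := by exact_mod_cast hm
  have hx : (0:ℝ) < (m:ℝ)/n := by positivity
  have hlt : ((m:ℝ)/n) ^ q < 2 ^ p := by
    rw [div_pow, div_lt_iff₀ (by positivity)]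
    exact_mod_cast h
  have := Real.logb_lt_logb (b := 2) one_lt_two (by positivity) hlt
  rw [Real.logb_pow, Real.logb_pow, Real.logb_self_eq_one one_lt_two] at this
  have hq' : (0:ℝ) < q := by exact_mod_cast hq
  rw [lt_div_iff₀ hq']
  nlinarith [this]

lemma lt_logb_div (m n p q : ℕ) (hm : 0 < m) (hn : 0 < n) (hq : 0 < q)
    (h : 2 ^ p * n ^ q < m ^ q) : (p : ℝ) / q < Real.logb 2 ((m : ℝ) / n) := by
  have hn' : (0:ℝ) < n := by exact_mod_cast hn
  have hm' : (0:ℝ) < m := by exact_mod_cast hm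
  have hlt : (2:ℝ) ^ p < ((m:ℝ)/n) ^ q := by
    rw [div_pow, lt_div_iff₀ (by positivity)]
    exact_mod_cast h
  have := Real.logb_lt_logb (b := 2) one_lt_two (by positivity) hlt
  rw [Real.logb_pow, Real.logb_pow, Real.logb_self_eq_one one_lt_two] at this
  have hq' : (0:ℝ) < q := by exact_mod_cast hq
  rw [div_lt_iff₀ hq']
  nlinarith [this]

/-- One-parameter quantum algorithm with preprocessing: there is `0 < α < 1/3` with
`(1−α) + H(α) = H(α)/2 + (1−α)·log₂3` and `(1−α) + H(α) ≤ log₂ 2.97625`. -/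
theorem stmt_13 :
    ∃ α : ℝ, 0 < α ∧ α < 1 / 3 ∧
      (1 - α) + binEntropy α = (1 / 2) * binEntropy α + (1 - α) * Real.logb 2 3 ∧
      (1 - α) + binEntropy α ≤ Real.logb 2 2.97625 := by
  set L : ℝ := Real.logb 2 3 with hL
  -- bounds on logs
  have hL3 : L = Real.logb 2 ((3:ℝ)/1) := by norm_num [hL]
  have hL_lb : (1054 : ℝ) / 665 < L := by
    rw [hL3]; exact_mod_cast lt_logb_div 3 1 1054 665 (by norm_num) one_pos (by norm_num) (by decide +kernel)
  have hL_ub : L < (9971 : ℝ) / 6291 := by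
    rw [hL3]; exact_mod_cast logb_div_lt 3 1 9971 6291 (by norm_num) one_pos (by norm_num) (by decide +kernel)
  have hU : Real.logb 2 ((2725:ℝ)/749) < (3855 : ℝ) / 2069 := by
    exact_mod_cast logb_div_lt 2725 749 3855 2069 (by norm_num) (by norm_num) (by norm_num) (by decide +kernel)
  have hV : Real.logb 2 ((2725:ℝ)/1976) < (568 : ℝ) / 1225 := by
    exact_mod_cast logb_div_lt 2725 1976 568 1225 (by norm_num) (by norm_num) (by norm_num) (by decide +kernel)
  have h2381 : (37107 : ℝ) / 3308 < Real.logb 2 ((2381:ℝ)/1) := by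
    exact_mod_cast lt_logb_div 2381 1 37107 3308 (by norm_num) one_pos (by norm_num) (by decide +kernel)
  have h5 : Real.logb 2 ((5:ℝ)/1) < (10790 : ℝ) / 4647 := by
    exact_mod_cast logb_div_lt 5 1 10790 4647 (by norm_num) one_pos (by norm_num) (by decide +kernel)
  -- the function whose root we seek
  set f : ℝ → ℝ := fun α => (1 - α) + binEntropy α
      - ((1 / 2) * binEntropy α + (1 - α) * L) with hf
  have hcont : ContinuousOn f (Set.Icc (749/2725 : ℝ) (1/3)) := by
    apply Continuous.continuousOn
    fun_prop
  -- value at a = 749/2725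
  have ha_val : f (749/2725) < 0 := by
    have e1 : Real.logb 2 ((749:ℝ)/2725) = - Real.logb 2 ((2725:ℝ)/749) := by
      rw [← Real.logb_inv]; norm_num
    have e2 : Real.logb 2 ((1976:ℝ)/2725) = - Real.logb 2 ((2725:ℝ)/1976) := by
      rw [← Real.logb_inv]; norm_num
    have hbe : binEntropy (749/2725)
        = (749/2725) * Real.logb 2 ((2725:ℝ)/749)
          + (1976/2725) * Real.logb 2 ((2725:ℝ)/1976) := by
      unfold binEntropy
      have : (1 : ℝ) - 749/2725 = (1976:ℝ)/2725 := by norm_num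
      rw [this, e1, e2]
      ring
    rw [hf]
    simp only [hbe]
    nlinarith [hL_lb, hU, hV]
  -- value at 1/3
  have hb_val : 0 < f (1/3) := by
    have e1 : Real.logb 2 ((1:ℝ)/3) = - L := by
      rw [← Real.logb_inv]; norm_num
    have e2 : Real.logb 2 ((2:ℝ)/3) = 1 - L := by
      rw [Real.logb_div (by norm_num) (by norm_num),
        Real.logb_self_eq_one one_lt_two]
    have hbe : binEntropy (1/3) = L - 2/3 := by
      unfold binEntropy
      have h13 : (1 : ℝ) - 1/3 = (2:ℝ)/3 := by norm_num
      rw [h13, show Real.logb 2 (1/3 : ℝ) = -L from e1, e2]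
      ring
    rw [hf]
    simp only [hbe]
    nlinarith [hL_ub]
  -- intermediate value theorem
  have hsub : Set.Ioo (f (749/2725)) (f (1/3)) ⊆ f '' Set.Ioo (749/2725 : ℝ) (1/3) :=
    intermediate_value_Ioo (by norm_num) hcont
  obtain ⟨α, hαmem, hα0⟩ := hsub ⟨ha_val, hb_val⟩
  obtain ⟨ha1, ha2⟩ := hαmem
  have heq : (1 - α) + binEntropy α = (1 / 2) * binEntropy α + (1 - α) * L := by
    have := hα0
    rw [hf] at this
    linarith [this]
  refine ⟨α, by linarith, ha2, heq, ?_⟩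
  -- the bound: value = (1-α)(2L-1) ≤ logb 2 2.97625
  have hval : (1 - α) + binEntropy α = (1 - α) * (2 * L - 1) := by
    -- from heq : binEntropy α = 2 (1-α)(L-1)
    linarith [heq]
  have h297 : Real.logb 2 2.97625 = Real.logb 2 ((2381:ℝ)/1) - 5 - 2 * Real.logb 2 ((5:ℝ)/1) := by
    have : (2.97625 : ℝ) = 2381 / 800 := by norm_num
    rw [this, Real.logb_div (by norm_num) (by norm_num)]
    have h800 : (800 : ℝ) = 2 ^ 5 * 5 ^ 2 := by norm_num
    rw [h800, Real.logb_mul (by norm_num) (by norm_num), Real.logb_pow, Real.logb_pow,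
      Real.logb_self_eq_one one_lt_two]
    norm_num
    ring
  rw [hval, h297]
  nlinarith [hL_ub, h2381, h5, ha1, ha2]
end
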